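/- Let F₋(y) = −√(−2y)·tanh(√(−y/2)) for y ≤ 0. Then F₋ is differentiable on (−∞,0) with F₋'(y) = (1/(2cosh²√(−y/2)))·(1 + sinh(√(−2y))/√(−2y)), and F₋' : (−∞,0) → (0,1) is a bijection onto (0,1). -/

import Mathlib

open Real Filter

/-- `F₋(y) = −√(−2y)·tanh(√(−y/2))`, the `θ ≤ 0` branch of the rescaled
limiting cumulant function of the time-averaged square-root process. -/
noncomputable def Fminus (y : ℝ) : ℝ :=
  -Real.sqrt (-2 * y) * Real.tanh (Real.sqrt (-y / 2))

/-- The claimed derivative of `F₋`. -/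
noncomputable def FminusDeriv (y : ℝ) : ℝ :=
  1 / (2 * Real.cosh (Real.sqrt (-y / 2)) ^ 2) *
    (1 + Real.sinh (Real.sqrt (-2 * y)) / Real.sqrt (-2 * y))

/-- Auxiliary function: `FminusDeriv y = hAux (√(-2y))`. -/
noncomputable def hAux (t : ℝ) : ℝ := (t + Real.sinh t) / (t * (Real.cosh t + 1))

lemma hAux_hasDerivAt {t : ℝ} (ht : 0 < t) :
    HasDerivAt hAux
      (((1 + Real.cosh t) * (t * (Real.cosh t + 1)) -
        (t + Real.sinh t) * (1 * (Real.cosh t + 1) + t * Real.sinh t)) /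
        (t * (Real.cosh t + 1)) ^ 2) t := by
  have hcp : (0:ℝ) < Real.cosh t := Real.cosh_pos _
  have hne : t * (Real.cosh t + 1) ≠ 0 := by positivity
  have h1 : HasDerivAt (fun t : ℝ => t + Real.sinh t) (1 + Real.cosh t) t :=
    (hasDerivAt_id t).add (Real.hasDerivAt_sinh t)
  have h2 : HasDerivAt (fun t : ℝ => t * (Real.cosh t + 1))
      (1 * (Real.cosh t + 1) + t * Real.sinh t) t :=
    (hasDerivAt_id t).mul ((Real.hasDerivAt_cosh t).add_const 1)
  exact h1.div h2 hne

lemma hAux_deriv_neg {t : ℝ} (ht : 0 < t) : deriv hAux t < 0 := by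
  rw [(hAux_hasDerivAt ht).deriv]
  have hcp : (0:ℝ) < Real.cosh t := Real.cosh_pos _
  have hs : t < Real.sinh t := Real.self_lt_sinh_iff.2 ht
  have hid : Real.cosh t ^ 2 - Real.sinh t ^ 2 = 1 := Real.cosh_sq_sub_sinh_sq t
  have hnum : (1 + Real.cosh t) * (t * (Real.cosh t + 1)) -
      (t + Real.sinh t) * (1 * (Real.cosh t + 1) + t * Real.sinh t)
      = (t - Real.sinh t) * (1 + Real.cosh t) - t ^ 2 * Real.sinh t := by
    linear_combination t * hid
  rw [hnum]
  have hden : (0:ℝ) < (t * (Real.cosh t + 1)) ^ 2 := by positivity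
  apply div_neg_of_neg_of_pos _ hden
  nlinarith

lemma hAux_strictAnti : StrictAntiOn hAux (Set.Ioi 0) := by
  apply strictAntiOn_of_deriv_neg (convex_Ioi 0)
  · apply ContinuousOn.div (by fun_prop) (by fun_prop)
    intro x hx
    have hx0 : (0:ℝ) < x := hx
    have : (0:ℝ) < Real.cosh x := Real.cosh_pos _
    positivity
  · intro x hx
    rw [interior_Ioi] at hx
    exact hAux_deriv_neg hx

lemma sinh_lt_self_mul_cosh {t : ℝ} (ht : 0 < t) : Real.sinh t < t * Real.cosh t := by
  have key : ∀ x : ℝ, HasDerivAt (fun x : ℝ => x * Real.cosh x - Real.sinh x)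
      (x * Real.sinh x) x := by
    intro x
    have := ((hasDerivAt_id x).mul (Real.hasDerivAt_cosh x)).sub (Real.hasDerivAt_sinh x)
    refine this.congr_deriv ?_
    simp only [id_eq]
    ring
  have mono : StrictMonoOn (fun x : ℝ => x * Real.cosh x - Real.sinh x) (Set.Ici 0) := by
    apply strictMonoOn_of_deriv_pos (convex_Ici 0) (Continuous.continuousOn (by fun_prop))
    intro x hx
    rw [interior_Ici] at hx
    rw [(key x).deriv]
    exact mul_pos hx (Real.sinh_pos_iff.2 hx)
  have := mono Set.self_mem_Ici (Set.mem_Ici.2 ht.le) ht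
  simpa using this

lemma hAux_pos {t : ℝ} (ht : 0 < t) : 0 < hAux t := by
  have hcp : (0:ℝ) < Real.cosh t := Real.cosh_pos _
  have hs : t < Real.sinh t := Real.self_lt_sinh_iff.2 ht
  apply div_pos (by linarith) (by positivity)

lemma hAux_lt_one {t : ℝ} (ht : 0 < t) : hAux t < 1 := by
  have hcp : (0:ℝ) < Real.cosh t := Real.cosh_pos _
  have h := sinh_lt_self_mul_cosh ht
  rw [hAux, div_lt_one (by positivity)]
  nlinarith

lemma hAux_lt {t : ℝ} (ht : 0 < t) : hAux t < 2 / t := by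
  have hcp : (0:ℝ) < Real.cosh t := Real.cosh_pos _
  have hs : t < Real.sinh t := Real.self_lt_sinh_iff.2 ht
  have hsc : Real.sinh t < Real.cosh t := Real.sinh_lt_cosh _
  rw [hAux, div_lt_div_iff₀ (by positivity) ht]
  nlinarith

lemma hAux_gt {t v : ℝ} (ht : 0 < t) (hv : 0 < v) (h : v * (Real.cosh t + 1) < 2) :
    v < hAux t := by
  have hcp : (0:ℝ) < Real.cosh t := Real.cosh_pos _
  have hs : t < Real.sinh t := Real.self_lt_sinh_iff.2 ht
  rw [hAux, lt_div_iff₀ (by positivity)]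
  nlinarith

lemma key_eq (u : ℝ) (hu : 0 < u) :
    1 / (2 * Real.cosh u ^ 2) * (1 + Real.sinh (2 * u) / (2 * u)) = hAux (2 * u) := by
  have hcu : (0:ℝ) < Real.cosh u := Real.cosh_pos u
  rw [hAux, Real.cosh_two_mul, Real.sinh_two_mul, Real.cosh_sq]
  field_simp
  ring_nf

lemma FminusDeriv_eq {y : ℝ} (hy : y < 0) : FminusDeriv y = hAux (Real.sqrt (-2 * y)) := by
  have hu : (0:ℝ) < Real.sqrt (-y/2) := Real.sqrt_pos.2 (by linarith)
  have ht2 : Real.sqrt (-2*y) = 2 * Real.sqrt (-y/2) := by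
    rw [show (-2:ℝ)*y = 2^2 * (-y/2) by ring, Real.sqrt_mul (by positivity),
      Real.sqrt_sq (by norm_num)]
  rw [FminusDeriv, ht2]
  exact key_eq _ hu

lemma hasDerivAt_tanh' (x : ℝ) : HasDerivAt Real.tanh (1 / Real.cosh x ^ 2) x := by
  have hcp : (0:ℝ) < Real.cosh x := Real.cosh_pos x
  have h := (Real.hasDerivAt_sinh x).div (Real.hasDerivAt_cosh x) hcp.ne'
  rw [show Real.cosh x * Real.cosh x - Real.sinh x * Real.sinh x = 1 from by
    nlinarith [Real.cosh_sq_sub_sinh_sq x]] at h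
  have heq : Real.tanh = fun x => Real.sinh x / Real.cosh x :=
    funext fun x => Real.tanh_eq_sinh_div_cosh x
  rw [heq]
  exact h

lemma Fminus_hasDerivAt {y : ℝ} (hy : y < 0) : HasDerivAt Fminus (FminusDeriv y) y := by
  have h2y : (0:ℝ) < -2 * y := by linarith
  have hy2 : (0:ℝ) < -y / 2 := by linarith
  have hu0 : (0:ℝ) < Real.sqrt (-y / 2) := Real.sqrt_pos.2 hy2
  have ht2 : Real.sqrt (-2*y) = 2 * Real.sqrt (-y/2) := by
    rw [show (-2:ℝ)*y = 2^2 * (-y/2) by ring, Real.sqrt_mul (by positivity),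
      Real.sqrt_sq (by norm_num)]
  have hinner1 : HasDerivAt (fun y : ℝ => -2 * y) (-2) y := by
    simpa using (hasDerivAt_id y).const_mul (-2 : ℝ)
  have hinner2 : HasDerivAt (fun y : ℝ => -y / 2) (-1 / 2) y := by
    have := ((hasDerivAt_id y).neg.div_const 2)
    simpa [neg_div] using this
  have hs : HasDerivAt (fun y : ℝ => Real.sqrt (-2 * y))
      (1 / (2 * Real.sqrt (-2 * y)) * (-2)) y :=
    (Real.hasDerivAt_sqrt h2y.ne').comp y hinner1
  have hu : HasDerivAt (fun y : ℝ => Real.sqrt (-y / 2))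
      (1 / (2 * Real.sqrt (-y / 2)) * (-1 / 2)) y :=
    (Real.hasDerivAt_sqrt hy2.ne').comp y hinner2
  have htanh : HasDerivAt (fun y : ℝ => Real.tanh (Real.sqrt (-y / 2)))
      (1 / Real.cosh (Real.sqrt (-y / 2)) ^ 2 * (1 / (2 * Real.sqrt (-y / 2)) * (-1 / 2))) y :=
    (hasDerivAt_tanh' _).comp y hu
  have hmain := hs.neg.mul htanh
  have hF : Fminus = fun y : ℝ =>
      -Real.sqrt (-2 * y) * Real.tanh (Real.sqrt (-y / 2)) := rfl
  rw [hF]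
  refine hmain.congr_deriv ?_
  simp only [Pi.neg_apply]
  rw [FminusDeriv, ht2, Real.sinh_two_mul, Real.tanh_eq_sinh_div_cosh]
  have hcu : (0:ℝ) < Real.cosh (Real.sqrt (-y/2)) := Real.cosh_pos _
  revert hu0 hcu
  generalize Real.sqrt (-y / 2) = u
  intro hu0 hcu
  field_simp
  ring

theorem stmt11 :
    (∀ y : ℝ, y < 0 → HasDerivAt Fminus (FminusDeriv y) y) ∧
    Set.BijOn FminusDeriv (Set.Iio 0) (Set.Ioo 0 1) := by
  constructor
  · intro y hy
    exact Fminus_hasDerivAt hy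
  refine ⟨?_, ?_, ?_⟩
  · intro y hy
    have hy' : y < 0 := hy
    have ht : (0:ℝ) < Real.sqrt (-2*y) := Real.sqrt_pos.2 (by linarith)
    rw [Set.mem_Ioo, FminusDeriv_eq hy']
    exact ⟨hAux_pos ht, hAux_lt_one ht⟩
  · intro y1 h1 y2 h2 heq
    have hy1 : y1 < 0 := h1
    have hy2 : y2 < 0 := h2
    rw [FminusDeriv_eq hy1, FminusDeriv_eq hy2] at heq
    have ht1 : Real.sqrt (-2*y1) ∈ Set.Ioi (0:ℝ) := Real.sqrt_pos.2 (by linarith)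
    have ht2 : Real.sqrt (-2*y2) ∈ Set.Ioi (0:ℝ) := Real.sqrt_pos.2 (by linarith)
    have hteq := hAux_strictAnti.injOn ht1 ht2 heq
    have h1' := Real.sq_sqrt (by linarith : (0:ℝ) ≤ -2*y1)
    have h2' := Real.sq_sqrt (by linarith : (0:ℝ) ≤ -2*y2)
    rw [hteq] at h1'
    nlinarith [h1', h2']
  · intro v hv
    obtain ⟨hv0, hv1⟩ := hv
    set c : ℝ := (2 - v) / v with hc
    have hc1 : (1:ℝ) < c := by
      rw [hc, lt_div_iff₀ hv0]; linarith
    set a : ℝ := Real.log c / 2 with ha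
    have ha0 : (0:ℝ) < a := by
      have := Real.log_pos hc1
      rw [ha]; linarith
    have hexp2 : Real.exp a * Real.exp a = c := by
      rw [← Real.exp_add, show a + a = Real.log c from by rw [ha]; ring,
        Real.exp_log (by linarith)]
    have he1 : (1:ℝ) < Real.exp a := by
      have := Real.exp_lt_exp.2 ha0
      simpa using this
    have hea : Real.exp a < c := by nlinarith
    have hcosha : Real.cosh a < c := by
      rw [Real.cosh_eq]
      have h1 : Real.exp (-a) < Real.exp a := Real.exp_lt_exp.2 (by linarith)
      linarith
    have hva : v < hAux a := by
      apply hAux_gt ha0 hv0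
      have hvc : v * c = 2 - v := by rw [hc]; field_simp
      nlinarith
    set b : ℝ := max (a + 1) (3 / v) with hb
    have hab : a < b := lt_of_lt_of_le (by linarith) (le_max_left _ _)
    have hb0 : (0:ℝ) < b := lt_trans ha0 hab
    have hb3 : 3 / v ≤ b := le_max_right _ _
    have hvb : hAux b < v := by
      have h1 : hAux b < 2 / b := hAux_lt hb0
      have h2 : 2 / b ≤ 2 / (3 / v) := by
        gcongr
      have h3 : 2 / (3 / v) = 2 * v / 3 := by field_simp
      linarith
    have hcont : ContinuousOn hAux (Set.Icc a b) := by
      apply ContinuousOn.div (by fun_prop) (by fun_prop)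
      intro x hx
      have hx0 : (0:ℝ) < x := lt_of_lt_of_le ha0 hx.1
      have : (0:ℝ) < Real.cosh x := Real.cosh_pos x
      positivity
    have hsub := intermediate_value_Icc' hab.le hcont
    obtain ⟨t, htm, htv⟩ := hsub ⟨hvb.le, hva.le⟩
    have ht0 : (0:ℝ) < t := lt_of_lt_of_le ha0 htm.1
    refine ⟨-(t^2)/2, Set.mem_Iio.2 (by nlinarith), ?_⟩
    have hneg : -(t^2)/2 < 0 := by nlinarith
    have hsq : Real.sqrt (-2 * (-(t^2)/2)) = t := by
      rw [show -2 * (-(t^2)/2) = t^2 from by ring, Real.sqrt_sq ht0.le]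
    rw [FminusDeriv_eq hneg, hsq, htv]
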